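/- Let n ≥ 2. For any two injective group homomorphisms φ, ψ : DihedralGroup n → O(2), there exist a group automorphism θ of DihedralGroup n and a 2×2 real orthogonal matrix P with det P = 1 such that ψ(g) = P⁻¹·φ(θ(g))·P for all g ∈ DihedralGroup n. (The automorphism group of the dihedral group acts transitively on SO(2)-conjugacy classes of faithful orthogonal representations on ℝ².) -/

import Mathlib

open Matrix
namespace Stmt15Aux


abbrev M2 := Matrix (Fin 2) (Fin 2) ℝ
abbrev O2 := Matrix.orthogonalGroup (Fin 2) ℝ

def isRot (M : M2) : Prop :=
  M 1 1 = M 0 0 ∧ M 0 1 = -(M 1 0) ∧ (M 0 0)^2 + (M 1 0)^2 = 1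

def isRefl (M : M2) : Prop :=
  M 1 1 = -(M 0 0) ∧ M 0 1 = M 1 0 ∧ (M 0 0)^2 + (M 1 0)^2 = 1

lemma entries_of_mem {M : M2} (h : M ∈ O2) :
    (M 0 0)^2 + (M 0 1)^2 = 1 ∧ (M 1 0)^2 + (M 1 1)^2 = 1 ∧
      M 0 0 * M 1 0 + M 0 1 * M 1 1 = 0 := by
  rw [Matrix.mem_orthogonalGroup_iff] at h
  have h' : M * Mᵀ = 1 := by
    have : star M = Mᵀ := by ext i j; simp [Matrix.star_apply]
    exact h
  have h00 := congrFun (congrFun h' 0) 0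
  have h11 := congrFun (congrFun h' 1) 1
  have h01 := congrFun (congrFun h' 0) 1
  simp [Matrix.mul_apply, Fin.sum_univ_two, Matrix.one_apply] at h00 h11 h01
  refine ⟨by nlinarith [h00], by nlinarith [h11], by nlinarith [h01]⟩

lemma det_eq {M : M2} : M.det = M 0 0 * M 1 1 - M 0 1 * M 1 0 := Matrix.det_fin_two M

lemma isRot_of {M : M2} (h : M ∈ O2) (hd : M.det = 1) : isRot M := by
  obtain ⟨h1, h2, h3⟩ := entries_of_mem h
  rw [det_eq] at hd
  set a := M 0 0; set b := M 0 1; set c := M 1 0; set d := M 1 1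
  have hda : d = a := by linear_combination a*hd + b*h3 - d*h1
  have hcb : b = -c := by linear_combination d*h3 - b*h2 - c*hd
  exact ⟨hda, hcb, by linear_combination h1 - (b - c)*hcb⟩

lemma isRefl_of {M : M2} (h : M ∈ O2) (hd : M.det = -1) : isRefl M := by
  obtain ⟨h1, h2, h3⟩ := entries_of_mem h
  rw [det_eq] at hd
  set a := M 0 0; set b := M 0 1; set c := M 1 0; set d := M 1 1
  have hda : d = -a := by linear_combination a*hd + b*h3 - d*h1
  have hcb : b = c := by linear_combination d*h3 - b*h2 - c*hd
  exact ⟨hda, hcb, by linear_combination h1 - (b + c)*hcb⟩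

lemma rot_ext {M N : M2} (hM : isRot M) (hN : isRot N)
    (h0 : M 0 0 = N 0 0) (h1 : M 1 0 = N 1 0) : M = N := by
  obtain ⟨a1, a2, _⟩ := hM; obtain ⟨b1, b2, _⟩ := hN
  ext i j
  fin_cases i <;> fin_cases j <;> simp_all

lemma rot_entries {M : M2} (hM : isRot M) :
    M = !![M 0 0, -(M 1 0); M 1 0, M 0 0] := by
  obtain ⟨a1, a2, _⟩ := hM
  ext i j; fin_cases i <;> fin_cases j <;> simp_all

lemma mem_of_isRot {M : M2} (hM : isRot M) : M ∈ O2 := by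
  obtain ⟨a1, a2, a3⟩ := hM
  rw [Matrix.mem_orthogonalGroup_iff]
  have : star M = Mᵀ := by ext i j; simp [Matrix.star_apply]
  ext i j
  fin_cases i <;> fin_cases j <;>
    simp [Matrix.mul_apply, Fin.sum_univ_two, Matrix.one_apply, a1, a2] <;> nlinarith [a3]

lemma det_of_isRot {M : M2} (hM : isRot M) : M.det = 1 := by
  obtain ⟨a1, a2, a3⟩ := hM
  rw [det_eq, a1, a2]; nlinarith

lemma det_of_isRefl {M : M2} (hM : isRefl M) : M.det = -1 := by
  obtain ⟨a1, a2, a3⟩ := hM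
  rw [det_eq, a1, a2]; nlinarith

lemma isRot_one : isRot (1 : M2) := by
  refine ⟨?_, ?_, ?_⟩ <;> simp [Matrix.one_apply]

lemma rot_mul {M N : M2} (hM : isRot M) (hN : isRot N) : isRot (M * N) := by
  obtain ⟨a1, a2, a3⟩ := hM; obtain ⟨b1, b2, b3⟩ := hN
  refine ⟨?_, ?_, ?_⟩ <;>
    simp [Matrix.mul_apply, Fin.sum_univ_two, a1, a2, b1, b2] <;> nlinarith [a3, b3]

lemma rot_pow {M : M2} (hM : isRot M) (k : ℕ) : isRot (M ^ k) := by
  induction k with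
  | zero => simpa using isRot_one
  | succ m ih => rw [pow_succ]; exact rot_mul ih hM

lemma rot_comm {M N : M2} (hM : isRot M) (hN : isRot N) : M * N = N * M := by
  obtain ⟨a1, a2, _⟩ := hM; obtain ⟨b1, b2, _⟩ := hN
  ext i j
  fin_cases i <;> fin_cases j <;>
    simp [Matrix.mul_apply, Fin.sum_univ_two, a1, a2, b1, b2] <;> ring

lemma rot_transpose_mul_self {M : M2} (hM : isRot M) : Mᵀ * M = 1 := by
  obtain ⟨a1, a2, a3⟩ := hM
  ext i j
  fin_cases i <;> fin_cases j <;>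
    simp [Matrix.mul_apply, Fin.sum_univ_two, Matrix.one_apply, a1, a2] <;> nlinarith [a3]

lemma refl_transpose {M : M2} (hM : isRefl M) : Mᵀ = M := by
  obtain ⟨a1, a2, _⟩ := hM
  ext i j
  fin_cases i <;> fin_cases j <;> simp_all

lemma refl_sq {M : M2} (hM : isRefl M) : M * M = 1 := by
  obtain ⟨a1, a2, a3⟩ := hM
  ext i j
  fin_cases i <;> fin_cases j <;>
    simp [Matrix.mul_apply, Fin.sum_univ_two, Matrix.one_apply, a1, a2] <;> nlinarith [a3]

lemma refl_mul_rot {S R : M2} (hS : isRefl S) (hR : isRot R) : S * R = Rᵀ * S := by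
  obtain ⟨a1, a2, _⟩ := hS; obtain ⟨b1, b2, _⟩ := hR
  ext i j
  fin_cases i <;> fin_cases j <;>
    simp [Matrix.mul_apply, Fin.sum_univ_two, Matrix.transpose_apply, a1, a2, b1, b2] <;> ring

lemma rot_sq_one {M : M2} (hM : isRot M) (h : M * M = 1) : M = 1 ∨ M = -1 := by
  obtain ⟨a1, a2, a3⟩ := hM
  have h00 := congrFun (congrFun h 0) 0
  have h10 := congrFun (congrFun h 1) 0
  simp [Matrix.mul_apply, Fin.sum_univ_two, Matrix.one_apply, a1, a2] at h00 h10
  have hb : M 1 0 = 0 := by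
    have : M 1 0 * M 1 0 = 0 := by nlinarith [a3, h00]
    exact mul_self_eq_zero.mp this
  have ha : M 0 0 = 1 ∨ M 0 0 = -1 := by
    rcases mul_self_eq_one_iff.mp (show M 0 0 * M 0 0 = 1 by linear_combination a3 - (M 1 0)*hb) with h | h
    · exact Or.inl h
    · exact Or.inr h
  rcases ha with h | h
  · left; ext i j; fin_cases i <;> fin_cases j <;> simp_all
  · right; ext i j; fin_cases i <;> fin_cases j <;> simp_all

lemma det_pm {M : M2} (h : M ∈ O2) : M.det = 1 ∨ M.det = -1 := by
  rw [Matrix.mem_orthogonalGroup_iff] at h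
  have : star M = Mᵀ := by ext i j; simp [Matrix.star_apply]
  have hd : M.det * M.det = 1 := by
    have := congrArg Matrix.det h
    rwa [Matrix.det_mul, Matrix.det_transpose, Matrix.det_one] at this
  exact mul_self_eq_one_iff.mp hd


noncomputable def zmap (M : M2) : ℂ := (M 0 0 : ℝ) + (M 1 0 : ℝ) * Complex.I

lemma zmap_one : zmap (1 : M2) = 1 := by
  simp [zmap, Matrix.one_apply]

lemma zmap_mul {M N : M2} (hM : isRot M) : zmap (M * N) = zmap M * zmap N := by
  obtain ⟨a1, a2, _⟩ := hM
  apply Complex.ext <;>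
    simp [zmap, Matrix.mul_apply, Fin.sum_univ_two, a1, a2] <;> ring

lemma zmap_pow {M : M2} (hM : isRot M) (k : ℕ) : zmap (M ^ k) = zmap M ^ k := by
  induction k with
  | zero => simpa using zmap_one
  | succ m ih => rw [pow_succ, pow_succ, zmap_mul (rot_pow hM m), ih]

lemma zmap_inj {M N : M2} (hM : isRot M) (hN : isRot N) (h : zmap M = zmap N) : M = N := by
  have h0 : M 0 0 = N 0 0 := by
    have := congrArg Complex.re h; simpa [zmap] using this
  have h1 : M 1 0 = N 1 0 := by
    have := congrArg Complex.im h; simpa [zmap] using this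
  exact rot_ext hM hN h0 h1

lemma exists_pow_eq {n : ℕ} (hn : 2 ≤ n) {A A' : M2} (hA : isRot A) (hA' : isRot A')
    (hordA : orderOf A = n) (hordA' : orderOf A' = n) :
    ∃ k : ℕ, Nat.Coprime k n ∧ A' = A ^ k := by
  have : NeZero n := ⟨by omega⟩
  have hAn : A ^ n = 1 := by rw [← hordA]; exact pow_orderOf_eq_one A
  have hA'n : A' ^ n = 1 := by rw [← hordA']; exact pow_orderOf_eq_one A'
  have hprim : IsPrimitiveRoot (zmap A) n := by
    constructor
    · rw [← zmap_pow hA, hAn, zmap_one]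
    · intro l hl
      rw [← zmap_pow hA] at hl
      have : A ^ l = 1 := zmap_inj (rot_pow hA l) isRot_one (by rw [hl, zmap_one])
      rw [← hordA]
      exact orderOf_dvd_of_pow_eq_one this
  obtain ⟨k, hk, hzk⟩ := hprim.eq_pow_of_pow_eq_one (ξ := zmap A')
    (by rw [← zmap_pow hA', hA'n, zmap_one])
  have hA'eq : A' = A ^ k :=
    (zmap_inj (rot_pow hA k) hA' (by rw [zmap_pow hA, hzk])).symm
  refine ⟨k, ?_, hA'eq⟩
  have hk0 : k ≠ 0 := by
    intro h
    rw [h, pow_zero] at hA'eq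
    rw [hA'eq, orderOf_one] at hordA'
    omega
  have : orderOf (A ^ k) = n := by rw [← hA'eq, hordA']
  rw [orderOf_pow' A hk0, hordA] at this
  have hg : Nat.gcd n k = 1 := by
    rcases Nat.div_eq_self.mp this with h | h
    · omega
    · exact h
  exact Nat.coprime_comm.mp hg

lemma sqrt_rot {M : M2} (hM : isRot M) : ∃ Q : M2, isRot Q ∧ Q * Q = M := by
  obtain ⟨a1, a2, a3⟩ := hM
  set a := M 0 0 with ha
  set b := M 1 0 with hb
  by_cases hcase : a = -1
  · have hb0 : b = 0 := by
      have : b * b = 0 := by nlinarith [a3]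
      exact mul_self_eq_zero.mp this
    refine ⟨!![0, -1; 1, 0], ⟨by norm_num, by norm_num, by norm_num⟩, ?_⟩
    ext i j
    fin_cases i <;> fin_cases j <;>
      simp [Matrix.mul_apply, Fin.sum_univ_two, ← ha, ← hb, a1, a2, hcase, hb0]
  · have ha1 : -1 ≤ a := by nlinarith [a3, sq_nonneg b, sq_nonneg (a+1)]
    have hapos : 0 < 1 + a := by
      rcases lt_or_eq_of_le ha1 with h | h
      · linarith
      · exact absurd h.symm hcase
    set c := Real.sqrt ((1 + a)/2) with hc
    have hc2 : c ^ 2 = (1 + a)/2 := Real.sq_sqrt (by linarith)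
    have hcpos : 0 < c := Real.sqrt_pos.mpr (by linarith)
    set d := b / (2 * c) with hd
    have hb2 : b ^ 2 = 1 - a ^ 2 := by linarith [a3]
    have hd2 : d ^ 2 = (1 - a)/2 := by
      have h4 : (2*c)^2 = 2*(1+a) := by rw [mul_pow, hc2]; ring
      rw [hd, div_pow, h4, hb2, div_eq_div_iff (by linarith) (by norm_num)]
      ring
    refine ⟨!![c, -d; d, c], ⟨by norm_num, by norm_num, by simp; nlinarith [hc2, hd2]⟩, ?_⟩
    have h2cd : 2 * c * d = b := by
      rw [hd]; field_simp
    ext i j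
    fin_cases i <;> fin_cases j <;>
      simp [Matrix.mul_apply, Fin.sum_univ_two, ← ha, ← hb, a1, a2] <;> try nlinarith [hc2, hd2, h2cd]

open DihedralGroup


def dihAut {n : ℕ} (u : (ZMod n)ˣ) : MulAut (DihedralGroup n) where
  toFun g := match g with
    | .r i => .r (u * i)
    | .sr i => .sr (u * i)
  invFun g := match g with
    | .r i => .r (↑u⁻¹ * i)
    | .sr i => .sr (↑u⁻¹ * i)
  left_inv := by
    rintro (i | i) <;> simp [← mul_assoc, ← Units.val_mul]
  right_inv := by
    rintro (i | i) <;> simp [← mul_assoc, ← Units.val_mul]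
  map_mul' := by
    rintro (i | i) (j | j) <;> simp [mul_add, mul_sub]

@[simp] lemma dihAut_r {n : ℕ} (u : (ZMod n)ˣ) (i : ZMod n) :
    dihAut u (.r i) = .r (u * i) := rfl
@[simp] lemma dihAut_sr {n : ℕ} (u : (ZMod n)ˣ) (i : ZMod n) :
    dihAut u (.sr i) = .sr (u * i) := rfl

private def k4f : DihedralGroup 2 → DihedralGroup 2 := fun g =>
  match g with
  | .r i => if i = 0 then .r 0 else .sr 0
  | .sr i => if i = 0 then .r 1 else .sr 1

def k4swap : MulAut (DihedralGroup 2) where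
  toFun := k4f
  invFun := k4f
  left_inv := by decide
  right_inv := by decide
  map_mul' := by decide

lemma k4swap_r_one : k4swap (.r 1) = .sr 0 := by decide

private def k4g : DihedralGroup 2 → DihedralGroup 2 := fun g =>
  match g with
  | .r i => if i = 0 then .r 0 else .sr 1
  | .sr i => if i = 0 then .sr 0 else .r 1

def k4swap' : MulAut (DihedralGroup 2) where
  toFun := k4g
  invFun := k4g
  left_inv := by decide
  right_inv := by decide
  map_mul' := by decide

lemma k4swap'_r_one : k4swap' (.r 1) = .sr 1 := by decide



lemma isRefl_sr {n : ℕ} (hn : 2 ≤ n) (χ : DihedralGroup n →* Matrix.orthogonalGroup (Fin 2) ℝ)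
    (hχ : Function.Injective χ) (hd : ((χ (.r 1) : M2)).det = 1) :
    isRefl ((χ (.sr 0) : M2)) := by
  have hNZ : NeZero n := ⟨by omega⟩
  set Φ : DihedralGroup n →* M2 := (Matrix.orthogonalGroup (Fin 2) ℝ).subtype.comp χ with hΦdef
  have hΦinj : Function.Injective Φ := fun a b h => hχ (Subtype.ext h)
  have hmem : ∀ g, Φ g ∈ O2 := fun g => (χ g).2
  have hd' : (Φ (.r 1)).det = 1 := hd
  rcases det_pm (hmem (.sr 0)) with hdB | hdB
  swap
  · exact isRefl_of (hmem _) hdB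
  exfalso
  have hBrot : isRot (Φ (.sr 0)) := isRot_of (hmem _) hdB
  have hBB : Φ (.sr 0) * Φ (.sr 0) = 1 := by
    rw [← _root_.map_mul]
    have h : (.sr 0 : DihedralGroup n) * .sr 0 = 1 := by
      rw [DihedralGroup.sr_mul_sr, sub_zero, DihedralGroup.one_def]
    rw [h, _root_.map_one]
  rcases rot_sq_one hBrot hBB with h1 | h1
  · have : (.sr 0 : DihedralGroup n) = 1 := hΦinj (by rw [h1, _root_.map_one])
    rw [DihedralGroup.one_def] at this
    cases this
  · have hcomm : Φ (.sr 0 * .r 1) = Φ (.r 1 * .sr 0) := by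
      rw [_root_.map_mul, _root_.map_mul, h1, neg_one_mul, mul_neg_one]
    have heq := hΦinj hcomm
    rw [DihedralGroup.sr_mul_r, DihedralGroup.r_mul_sr] at heq
    simp only [DihedralGroup.sr.injEq, zero_add, zero_sub] at heq
    have h4 : ((2 : ℕ) : ZMod n) = 0 := by push_cast; linear_combination heq
    have hdvd : (n : ℕ) ∣ 2 := (ZMod.natCast_eq_zero_iff 2 n).mp h4
    have hn2 : n = 2 := by have := Nat.le_of_dvd (by norm_num) hdvd; omega
    subst hn2
    have hArot : isRot (Φ (.r 1)) := isRot_of (hmem _) hd'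
    have hAA : Φ (.r 1) * Φ (.r 1) = 1 := by
      rw [← _root_.map_mul]
      have h : (.r 1 : DihedralGroup 2) * .r 1 = 1 := by decide
      rw [h, _root_.map_one]
    rcases rot_sq_one hArot hAA with h2 | h2
    · have : (.r 1 : DihedralGroup 2) = 1 := hΦinj (by rw [h2, _root_.map_one])
      exact absurd this (by decide)
    · have : (.r 1 : DihedralGroup 2) = .sr 0 := hΦinj (by rw [h2, h1])
      exact absurd this (by decide)

lemma exists_aut {n : ℕ} (hn : 2 ≤ n) (χ : DihedralGroup n →* Matrix.orthogonalGroup (Fin 2) ℝ)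
    (hχ : Function.Injective χ) :
    ∃ θ : MulAut (DihedralGroup n), ((χ (θ (.r 1)) : M2)).det = 1 := by
  rcases det_pm (χ (.r 1)).2 with h | h
  · exact ⟨1, by simpa using h⟩
  · have hrefl : isRefl ((χ (.r 1) : M2)) := isRefl_of (χ (.r 1)).2 h
    have hsq : (.r 1 : DihedralGroup n) * .r 1 = 1 := by
      apply hχ
      rw [_root_.map_mul, _root_.map_one]
      exact Subtype.ext (by rw [Submonoid.coe_mul]; exact refl_sq hrefl)
    have hdvd : orderOf (.r 1 : DihedralGroup n) ∣ 2 :=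
      orderOf_dvd_of_pow_eq_one (by rw [pow_two]; exact hsq)
    rw [DihedralGroup.orderOf_r_one] at hdvd
    have hn2 : n = 2 := by have := Nat.le_of_dvd (by norm_num) hdvd; omega
    subst hn2
    rcases det_pm (χ (.sr 0)).2 with h0 | h0
    · exact ⟨k4swap, by rw [k4swap_r_one]; exact h0⟩
    · refine ⟨k4swap', ?_⟩
      rw [k4swap'_r_one]
      have hs : (.sr 1 : DihedralGroup 2) = .r 1 * .sr 0 := by decide
      rw [hs, _root_.map_mul, Submonoid.coe_mul, Matrix.det_mul, h, h0]
      norm_num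

lemma core {n : ℕ} (hn : 2 ≤ n) (φ ψ : DihedralGroup n →* Matrix.orthogonalGroup (Fin 2) ℝ)
    (hφ : Function.Injective φ) (hψ : Function.Injective ψ)
    (hdφ : ((φ (.r 1) : M2)).det = 1) (hdψ : ((ψ (.r 1) : M2)).det = 1) :
    ∃ θ : MulAut (DihedralGroup n), ∃ P : M2,
      P ∈ Matrix.orthogonalGroup (Fin 2) ℝ ∧ P.det = 1 ∧
      ∀ g : DihedralGroup n, (ψ g : M2) = P⁻¹ * (φ (θ g) : M2) * P := by
  have hNZ : NeZero n := ⟨by omega⟩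
  set Φ : DihedralGroup n →* M2 := (Matrix.orthogonalGroup (Fin 2) ℝ).subtype.comp φ with hΦdef
  set Ψ : DihedralGroup n →* M2 := (Matrix.orthogonalGroup (Fin 2) ℝ).subtype.comp ψ with hΨdef
  have hΦinj : Function.Injective Φ := fun a b h => hφ (Subtype.ext h)
  have hΨinj : Function.Injective Ψ := fun a b h => hψ (Subtype.ext h)
  have hΦmem : ∀ g, Φ g ∈ O2 := fun g => (φ g).2
  have hΨmem : ∀ g, Ψ g ∈ O2 := fun g => (ψ g).2
  have hArot : isRot (Φ (.r 1)) := isRot_of (hΦmem _) hdφ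
  have hA'rot : isRot (Ψ (.r 1)) := isRot_of (hΨmem _) hdψ
  have hordA : orderOf (Φ (.r 1)) = n := by
    rw [orderOf_injective Φ hΦinj, DihedralGroup.orderOf_r_one]
  have hordA' : orderOf (Ψ (.r 1)) = n := by
    rw [orderOf_injective Ψ hΨinj, DihedralGroup.orderOf_r_one]
  have hBrefl : isRefl (Φ (.sr 0)) := isRefl_sr hn φ hφ hdφ
  have hB'refl : isRefl (Ψ (.sr 0)) := isRefl_sr hn ψ hψ hdψ
  obtain ⟨k, hcop, hA'k⟩ := exists_pow_eq hn hArot hA'rot hordA hordA'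
  set u : (ZMod n)ˣ := ZMod.unitOfCoprime k hcop with hudef
  have hAn : Φ (.r 1) ^ n = 1 := by
    have h := pow_orderOf_eq_one (Φ (.r 1)); rwa [hordA] at h
  have hpow : ∀ a : ℕ, Φ (.r 1) ^ a = Φ (.r 1) ^ (a % n) := by
    intro a
    conv_lhs => rw [← Nat.div_add_mod a n]
    rw [pow_add, pow_mul, hAn, one_pow, one_mul]
  have hval : ∀ i : ZMod n, Φ (.r 1) ^ ((↑u * i : ZMod n)).val = Ψ (.r 1) ^ i.val := by
    intro i
    rw [hA'k, ← pow_mul, hpow (k * i.val)]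
    congr 1
    rw [ZMod.val_mul]
    have hcu : ((u : ZMod n)) = (k : ZMod n) := ZMod.coe_unitOfCoprime k hcop
    rw [hcu, ZMod.val_natCast]
    conv_rhs => rw [Nat.mul_mod]
    rw [Nat.mod_eq_of_lt (ZMod.val_lt i)]
  have hΦr : ∀ j : ZMod n, Φ (.r j) = Φ (.r 1) ^ j.val := by
    intro j
    conv_lhs => rw [← ZMod.natCast_zmod_val j, ← DihedralGroup.r_one_pow, _root_.map_pow]
  have hΨr : ∀ j : ZMod n, Ψ (.r j) = Ψ (.r 1) ^ j.val := by
    intro j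
    conv_lhs => rw [← ZMod.natCast_zmod_val j, ← DihedralGroup.r_one_pow, _root_.map_pow]
  have hΦsr : ∀ j : ZMod n, Φ (.sr j) = Φ (.sr 0) * Φ (.r 1) ^ j.val := by
    intro j
    have h : (.sr j : DihedralGroup n) = .sr 0 * .r j := by
      rw [DihedralGroup.sr_mul_r, zero_add]
    rw [h, _root_.map_mul, hΦr]
  have hΨsr : ∀ j : ZMod n, Ψ (.sr j) = Ψ (.sr 0) * Ψ (.r 1) ^ j.val := by
    intro j
    have h : (.sr j : DihedralGroup n) = .sr 0 * .r j := by
      rw [DihedralGroup.sr_mul_r, zero_add]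
    rw [h, _root_.map_mul, hΨr]
  have hBBmem : isRot (Φ (.sr 0) * Ψ (.sr 0)) := by
    apply isRot_of (mul_mem (hΦmem _) (hΨmem _))
    rw [Matrix.det_mul, det_of_isRefl hBrefl, det_of_isRefl hB'refl]
    norm_num
  obtain ⟨Q, hQrot, hQsq⟩ := sqrt_rot hBBmem
  have hQTQ : Qᵀ * Q = 1 := rot_transpose_mul_self hQrot
  have hQinv : Q⁻¹ = Qᵀ := Matrix.inv_eq_left_inv hQTQ
  have hQT2 : Qᵀ * Qᵀ = Ψ (.sr 0) * Φ (.sr 0) := by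
    have h := congrArg Matrix.transpose hQsq
    rwa [Matrix.transpose_mul, Matrix.transpose_mul, refl_transpose hBrefl,
      refl_transpose hB'refl] at h
  refine ⟨dihAut u, Q, mem_of_isRot hQrot, det_of_isRot hQrot, ?_⟩
  rintro (i | i)
  · show Ψ (.r i) = Q⁻¹ * Φ (dihAut u (.r i)) * Q
    rw [hQinv, dihAut_r, hΦr, hΨr, hval i]
    have hR : isRot (Ψ (.r 1) ^ i.val) := rot_pow hA'rot _
    rw [mul_assoc, rot_comm hR hQrot, ← mul_assoc, hQTQ, one_mul]
  · show Ψ (.sr i) = Q⁻¹ * Φ (dihAut u (.sr i)) * Q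
    rw [hQinv, dihAut_sr, hΦsr, hΨsr, hval i]
    have hR : isRot (Ψ (.r 1) ^ i.val) := rot_pow hA'rot _
    symm
    calc Qᵀ * (Φ (.sr 0) * Ψ (.r 1) ^ i.val) * Q
        = Qᵀ * (Φ (.sr 0) * (Ψ (.r 1) ^ i.val * Q)) := by
          simp only [mul_assoc]
      _ = Qᵀ * (Φ (.sr 0) * Q * Ψ (.r 1) ^ i.val) := by
          rw [rot_comm hR hQrot, ← mul_assoc (Φ (.sr 0)) Q _]
      _ = Qᵀ * Qᵀ * Φ (.sr 0) * Ψ (.r 1) ^ i.val := by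
          rw [refl_mul_rot hBrefl hQrot]
          simp only [mul_assoc]
      _ = Ψ (.sr 0) * (Φ (.sr 0) * Φ (.sr 0)) * Ψ (.r 1) ^ i.val := by
          rw [hQT2]
          simp only [mul_assoc]
      _ = Ψ (.sr 0) * Ψ (.r 1) ^ i.val := by
          rw [refl_sq hBrefl, mul_one]

end Stmt15Aux

theorem stmt_15 (n : ℕ) (hn : 2 ≤ n)
    (φ ψ : DihedralGroup n →* Matrix.orthogonalGroup (Fin 2) ℝ)
    (hφ : Function.Injective φ) (hψ : Function.Injective ψ) :
    ∃ θ : MulAut (DihedralGroup n), ∃ P : Matrix (Fin 2) (Fin 2) ℝ,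
      P ∈ Matrix.orthogonalGroup (Fin 2) ℝ ∧ P.det = 1 ∧
      ∀ g : DihedralGroup n,
        (ψ g : Matrix (Fin 2) (Fin 2) ℝ) = P⁻¹ * (φ (θ g) : Matrix (Fin 2) (Fin 2) ℝ) * P := by
  classical
  obtain ⟨θ₁, hθ₁⟩ := Stmt15Aux.exists_aut hn φ hφ
  obtain ⟨θ₂, hθ₂⟩ := Stmt15Aux.exists_aut hn ψ hψ
  set φ' : DihedralGroup n →* Matrix.orthogonalGroup (Fin 2) ℝ := φ.comp θ₁.toMonoidHom with hφ'def
  set ψ' : DihedralGroup n →* Matrix.orthogonalGroup (Fin 2) ℝ := ψ.comp θ₂.toMonoidHom with hψ'def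
  have hφ'inj : Function.Injective φ' := fun a b h => θ₁.injective (hφ h)
  have hψ'inj : Function.Injective ψ' := fun a b h => θ₂.injective (hψ h)
  obtain ⟨θ, P, hPmem, hPdet, hP⟩ := Stmt15Aux.core hn φ' ψ' hφ'inj hψ'inj hθ₁ hθ₂
  refine ⟨θ₁ * θ * θ₂⁻¹, P, hPmem, hPdet, ?_⟩
  intro g
  have h1 := hP (θ₂⁻¹ g)
  have h2 : ψ' ((θ₂⁻¹ : MulAut (DihedralGroup n)) g) = ψ g := by
    show ψ (θ₂ (θ₂.symm g)) = ψ g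
    rw [MulEquiv.apply_symm_apply]
  have h3 : φ' (θ ((θ₂⁻¹ : MulAut (DihedralGroup n)) g)) = φ ((θ₁ * θ * θ₂⁻¹) g) := rfl
  rw [h2, h3] at h1
  exact h1
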